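/- Let g be a Lie algebra over a field k, U(g) its universal enveloping algebra, J a left ideal of U(g), and M = U(g)/J the quotient left U(g)-module. Let V = M* be the space of k-linear functionals on M and V₀ = { f ∈ V : f(1 + J) = 0 }. Suppose W is a subspace of V with W ⊆ V₀ such that for every f ∈ W and every x ∈ g the functional m ↦ f(x·m) again lies in W. Then W = 0. -/

import Mathlib

set_option synthInstance.maxHeartbeats 1000000
set_option maxHeartbeats 1000000

section

attribute [local instance 100] LieRing.ofAssociativeRing
attribute [local instance 100] LieAlgebra.ofAssociativeAlgebra

theorem adjoin_range_ι_eq_top (k : Type*) [CommRing k] (g : Type*) [LieRing g] [LieAlgebra k g] :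
    Algebra.adjoin k (Set.range (UniversalEnvelopingAlgebra.ι k (L := g))) = ⊤ := by
  set A := Algebra.adjoin k (Set.range (UniversalEnvelopingAlgebra.ι k (L := g)))
  have hι : ∀ x : g, (UniversalEnvelopingAlgebra.ι k x : UniversalEnvelopingAlgebra k g) ∈ A :=
    fun x => Algebra.subset_adjoin ⟨x, rfl⟩
  let ι' : g →ₗ⁅k⁆ A :=
    { toFun := fun x => ⟨UniversalEnvelopingAlgebra.ι k x, hι x⟩
      map_add' := fun x y => by ext; simp
      map_smul' := fun c x => by ext; simp
      map_lie' := fun {x y} => by ext; simp [Ring.lie_def] }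
  have key : (A.val.comp ((UniversalEnvelopingAlgebra.lift k) ι')) =
      AlgHom.id k (UniversalEnvelopingAlgebra k g) := by
    apply UniversalEnvelopingAlgebra.hom_ext
    ext x
    simp [ι']
  rw [eq_top_iff]
  intro u _
  have := congrArg (fun φ => φ u) key
  simp only [AlgHom.comp_apply, AlgHom.id_apply] at this
  rw [← this]
  exact (((UniversalEnvelopingAlgebra.lift k) ι') u).2

end

/-- Let `J` be a left ideal of the universal enveloping algebra `U(g)` of a Lie
algebra `g` over a field `k`, let `M = U(g)/J`, let `V = M*` and
`V₀ = {f ∈ V | f(1 + J) = 0}`.  Any subspace `W ⊆ V₀` such that for every `f ∈ W`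
and `x ∈ g` the functional `m ↦ f(x·m)` again lies in `W` must be zero. -/
theorem dual_submodule_in_V₀_eq_bot
    (k : Type*) [Field k] (g : Type*) [LieRing g] [LieAlgebra k g]
    (J : Ideal (UniversalEnvelopingAlgebra k g))
    (W : Submodule k ((UniversalEnvelopingAlgebra k g ⧸ J) →ₗ[k] k))
    (hW₀ : ∀ f ∈ W, f (Submodule.Quotient.mk (1 : UniversalEnvelopingAlgebra k g)) = 0)
    (hWinv : ∀ f ∈ W, ∀ x : g, ∃ f' ∈ W,
      ∀ m : UniversalEnvelopingAlgebra k g ⧸ J,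
        f' m = f ((UniversalEnvelopingAlgebra.ι k x : UniversalEnvelopingAlgebra k g) • m)) :
    W = ⊥ := by
  -- P u : every f in W kills the class of u
  set U := UniversalEnvelopingAlgebra k g
  let P : U → Prop := fun u => ∀ f ∈ W, f (Submodule.Quotient.mk u) = 0
  have hP1 : P 1 := hW₀
  have hPadd : ∀ {u v}, P u → P v → P (u + v) := by
    intro u v hu hv f hf
    have : (Submodule.Quotient.mk (u + v) : U ⧸ J) =
        Submodule.Quotient.mk u + Submodule.Quotient.mk v := rfl
    rw [this, map_add, hu f hf, hv f hf, add_zero]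
  have hPsmul : ∀ (c : k) {u}, P u → P (c • u) := by
    intro c u hu f hf
    have : (Submodule.Quotient.mk (c • u) : U ⧸ J) = c • Submodule.Quotient.mk u :=
      Submodule.Quotient.mk_smul J c u
    rw [this, map_smul, hu f hf, smul_zero]
  -- The set of a ∈ U preserving P under left multiplication is a subalgebra.
  let T : Subalgebra k U :=
    { carrier := { a | ∀ u, P u → P (a * u) }
      mul_mem' := by
        intro a b ha hb u hu
        rw [mul_assoc]; exact ha _ (hb u hu)
      add_mem' := by
        intro a b ha hb u hu
        rw [add_mul]; exact hPadd (ha u hu) (hb u hu)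
      one_mem' := by intro u hu; rwa [one_mul]
      zero_mem' := by
        intro u hu f hf
        have : (Submodule.Quotient.mk (0 * u) : U ⧸ J) = 0 := by rw [zero_mul]; rfl
        rw [this, map_zero]
      algebraMap_mem' := by
        intro c u hu
        have : (algebraMap k U c) * u = c • u := (Algebra.smul_def c u).symm
        rw [this]; exact hPsmul c hu }
  have hιT : ∀ x : g, (UniversalEnvelopingAlgebra.ι k x : U) ∈ T := by
    intro x u hu f hf
    obtain ⟨f', hf', hff'⟩ := hWinv f hf x
    have hsm : ((UniversalEnvelopingAlgebra.ι k x : U) • (Submodule.Quotient.mk u : U ⧸ J)) =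
        Submodule.Quotient.mk ((UniversalEnvelopingAlgebra.ι k x : U) * u) := rfl
    rw [← hsm, ← hff' (Submodule.Quotient.mk u)]
    exact hu f' hf'
  have hT : T = ⊤ := by
    rw [eq_top_iff, ← adjoin_range_ι_eq_top k g]
    exact Algebra.adjoin_le (by rintro _ ⟨x, rfl⟩; exact hιT x)
  -- conclude
  rw [eq_bot_iff]
  intro f hf
  simp only [Submodule.mem_bot]
  ext m
  obtain ⟨u, rfl⟩ := Submodule.Quotient.mk_surjective J m
  have hu : P u := by
    have : u ∈ T := hT ▸ Algebra.mem_top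
    have := this 1 hP1
    rwa [mul_one] at this
  simpa using hu f hf
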